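/- Every map p ∈ E_b(Ω,φ) is Borel measurable, and the pushforward operator ψp : X* → X* defined by (ψp μ)(e) = μ(p⁻¹e) for Borel sets e ⊆ Ω belongs to Γ(Ω,φ). -/

import Mathlib

open MeasureTheory Filter Topology

/-- The pairing `⟨f, μ⟩ = ∫ f dμ` of a function with a finite signed Borel measure,
defined via the Jordan decomposition of the signed measure. -/
noncomputable def spair {Ω : Type*} [MeasurableSpace Ω] (f : Ω → ℝ) (μ : SignedMeasure Ω) : ℝ :=
  (∫ ω, f ω ∂μ.toJordanDecomposition.posPart) - (∫ ω, f ω ∂μ.toJordanDecomposition.negPart)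

/-- The weak* topology on the space `X*` of finite signed Borel measures, i.e. the topology
of convergence of the pairings with all continuous functions `x ∈ C(Ω, ℝ)`. With this topology
on the codomain, the product topology on `SignedMeasure Ω → SignedMeasure Ω` is precisely the
weak* operator topology (pointwise convergence with `X*` in its weak* topology). -/
noncomputable instance weakStarTopology {Ω : Type*} [TopologicalSpace Ω] [MeasurableSpace Ω] :
    TopologicalSpace (SignedMeasure Ω) :=
  TopologicalSpace.induced (fun μ => fun x : C(Ω, ℝ) => spair (⇑x) μ) inferInstance

/-- The operator `V : X* → X*`, pushforward by `φ`: `(Vμ)(e) = μ(φ⁻¹ e)`. -/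
noncomputable def Vop {Ω : Type*} [MeasurableSpace Ω] (φ : Ω → Ω) :
    SignedMeasure Ω → SignedMeasure Ω :=
  fun μ => μ.map φ

/-- The Dirac measure at `ω`, as a signed measure. -/
noncomputable def diracSM {Ω : Type*} [MeasurableSpace Ω] (ω : Ω) : SignedMeasure Ω :=
  (Measure.dirac ω).toSignedMeasure

/-- `Γ(Ω,φ)`: the closure of `{Vⁿ : n ≥ 0}` in the weak* operator topology. -/
def GammaSG {Ω : Type*} [TopologicalSpace Ω] [MeasurableSpace Ω] (φ : Ω → Ω) :
    Set (SignedMeasure Ω → SignedMeasure Ω) :=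
  closure (Set.range fun n : ℕ => (Vop φ)^[n])

/-- `G(Ω,φ)`: the closure of the convex hull of `{Vⁿ : n ≥ 0}` in the weak* operator topology. -/
def GSG {Ω : Type*} [TopologicalSpace Ω] [MeasurableSpace Ω] (φ : Ω → Ω) :
    Set (SignedMeasure Ω → SignedMeasure Ω) :=
  closure (convexHull ℝ (Set.range fun n : ℕ => (Vop φ)^[n]))

/-- The kernel `L = {Q ∈ G(Ω,φ) : V ∘ Q = Q}` of the semigroup `G(Ω,φ)`. -/
def Lker {Ω : Type*} [TopologicalSpace Ω] [MeasurableSpace Ω] (φ : Ω → Ω) :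
    Set (SignedMeasure Ω → SignedMeasure Ω) :=
  {Q ∈ GSG φ | Vop φ ∘ Q = Q}

/-- The Ellis enveloping semigroup `E(Ω,φ)`: the closure of the iterates `{φⁿ : n ≥ 0}`
in the product topology (pointwise convergence) on `Ω → Ω`. -/
def EllisE {Ω : Type*} [TopologicalSpace Ω] (φ : Ω → Ω) : Set (Ω → Ω) :=
  closure (Set.range fun n : ℕ => φ^[n])

/-- `E_b(Ω,φ)`: the smallest set of self-maps of `Ω` containing the iterates `{φⁿ : n ≥ 0}`
and sequentially closed under pointwise convergence. -/
inductive Eb {Ω : Type*} [TopologicalSpace Ω] (φ : Ω → Ω) : (Ω → Ω) → Prop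
  | iterate (n : ℕ) : Eb φ φ^[n]
  | lim (p : ℕ → Ω → Ω) (q : Ω → Ω) (hp : ∀ k, Eb φ (p k))
      (hq : ∀ ω, Tendsto (fun k => p k ω) atTop (𝓝 (q ω))) : Eb φ q

/-- `E₁(Ω,φ)`: the set of pointwise limits of sequences of iterates `φ^{n_k}`. -/
def E1SG {Ω : Type*} [TopologicalSpace Ω] (φ : Ω → Ω) : Set (Ω → Ω) :=
  {p | ∃ n : ℕ → ℕ, ∀ ω, Tendsto (fun k => φ^[n k] ω) atTop (𝓝 (p ω))}

/-- An operator `P ∈ Γ(Ω,φ)` with `p = πP` is regular if `p` is Borel measurable and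
`(Pμ)(e) = μ(p⁻¹ e)` for every Borel probability measure `μ` and Borel set `e`. -/
def RegularOperator {Ω : Type*} [TopologicalSpace Ω] [MeasurableSpace Ω]
    (P : SignedMeasure Ω → SignedMeasure Ω) (p : Ω → Ω) : Prop :=
  Measurable p ∧ ∀ (μ : Measure Ω) [IsProbabilityMeasure μ],
    ∀ e : Set Ω, MeasurableSet e → P μ.toSignedMeasure e = (μ (p ⁻¹' e)).toReal

/-- A minimal set of the semicascade `(Ω,φ)`: a nonempty closed `φ`-invariant set containing
no proper nonempty closed `φ`-invariant subset. -/
def IsMinimalSet {Ω : Type*} [TopologicalSpace Ω] (φ : Ω → Ω) (m : Set Ω) : Prop :=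
  m.Nonempty ∧ IsClosed m ∧ Set.MapsTo φ m m ∧
    ∀ m' ⊆ m, m'.Nonempty → IsClosed m' → Set.MapsTo φ m' m' → m' = m

/-- The orbit closure of a point `ω`: the closure of the trajectory `{φⁿ ω : n ≥ 0}`. -/
def orbitClosure {Ω : Type*} [TopologicalSpace Ω] (φ : Ω → Ω) (ω : Ω) : Set Ω :=
  closure (Set.range fun n : ℕ => φ^[n] ω)

/-- A `φ`-ergodic measure: a `φ`-invariant Borel probability measure `μ` such that
`μ(e) ∈ {0,1}` for every Borel set `e` with `φ⁻¹ e = e`. -/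
def IsErgodicMeasure {Ω : Type*} [MeasurableSpace Ω] (φ : Ω → Ω) (μ : Measure Ω) : Prop :=
  IsProbabilityMeasure μ ∧ (∀ e : Set Ω, MeasurableSet e → μ (φ ⁻¹' e) = μ e) ∧
    (∀ e : Set Ω, MeasurableSet e → φ ⁻¹' e = e → μ e = 0 ∨ μ e = 1)

/-- The support of a Borel measure: the smallest closed set of full measure
(the intersection of all closed sets of full measure). -/
def msupp {Ω : Type*} [TopologicalSpace Ω] [MeasurableSpace Ω] (μ : Measure Ω) : Set Ω :=
  ⋂₀ {s : Set Ω | IsClosed s ∧ μ sᶜ = 0}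

/-- The semicascade `(Ω,φ)` is tame: for every continuous `x` and every strictly increasing
sequence `n(1) < n(2) < ⋯`, the infimum over finitely supported real coefficients `a` with
`Σ|aₖ| = 1` of the sup-norms `‖Σₖ aₖ · (x ∘ φ^{n(k)})‖` is `0`. -/
def Tame {Ω : Type*} [TopologicalSpace Ω] [CompactSpace Ω] (φ : Ω → Ω)
    (hφ : Continuous φ) : Prop :=
  ∀ (x : C(Ω, ℝ)) (n : ℕ → ℕ), StrictMono n →
    sInf {r : ℝ | ∃ a : ℕ →₀ ℝ, (∑ k ∈ a.support, |a k|) = 1 ∧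
      r = ‖∑ k ∈ a.support, a k • x.comp ⟨φ^[n k], hφ.iterate (n k)⟩‖} = 0

/-- Points `a, b` are proximal: `inf_{n ≥ 0} d(φⁿ a, φⁿ b) = 0`. -/
def Proximal {Ω : Type*} [PseudoMetricSpace Ω] (φ : Ω → Ω) (a b : Ω) : Prop :=
  (⨅ n : ℕ, dist (φ^[n] a) (φ^[n] b)) = 0

variable {Ω : Type*} [TopologicalSpace Ω] [CompactSpace Ω] [TopologicalSpace.MetrizableSpace Ω]
  [Nonempty Ω] [MeasurableSpace Ω] [BorelSpace Ω]

set_option linter.unusedSectionVars false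
section Aux

open MeasureTheory

variable {Ω : Type*} [TopologicalSpace Ω] [CompactSpace Ω] [TopologicalSpace.MetrizableSpace Ω]
  [MeasurableSpace Ω] [BorelSpace Ω]

lemma integrable_contMap (x : C(Ω, ℝ)) (μ : Measure Ω) [IsFiniteMeasure μ] :
    Integrable (⇑x) μ :=
  x.continuous.integrable_of_hasCompactSupport
    (IsCompact.of_isClosed_subset isCompact_univ (isClosed_tsupport _) (Set.subset_univ _))

lemma map_signed (p : Ω → Ω) (hp : Measurable p) (μ : SignedMeasure Ω) :
    μ.map p = (μ.toJordanDecomposition.posPart.map p).toSignedMeasure -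
      (μ.toJordanDecomposition.negPart.map p).toSignedMeasure := by
  haveI := μ.toJordanDecomposition.posPart.isFiniteMeasure_map p
  haveI := μ.toJordanDecomposition.negPart.isFiniteMeasure_map p
  refine VectorMeasure.ext fun s hs => ?_
  rw [VectorMeasure.map_apply _ hp hs, VectorMeasure.sub_apply,
    Measure.toSignedMeasure_apply_measurable hs, Measure.toSignedMeasure_apply_measurable hs,
    map_measureReal_apply hp hs, map_measureReal_apply hp hs]
  conv_lhs => rw [← μ.toSignedMeasure_toJordanDecomposition]
  rw [JordanDecomposition.toSignedMeasure, VectorMeasure.sub_apply,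
    Measure.toSignedMeasure_apply_measurable (hp hs),
    Measure.toSignedMeasure_apply_measurable (hp hs)]

lemma spair_map (x : C(Ω, ℝ)) (p : Ω → Ω) (hp : Measurable p) (μ : SignedMeasure Ω) :
    spair (⇑x) (μ.map p) = (∫ ω, x (p ω) ∂μ.toJordanDecomposition.posPart) -
      (∫ ω, x (p ω) ∂μ.toJordanDecomposition.negPart) := by
  set a := μ.toJordanDecomposition.posPart.map p with ha
  set b := μ.toJordanDecomposition.negPart.map p with hb
  haveI : IsFiniteMeasure a := μ.toJordanDecomposition.posPart.isFiniteMeasure_map p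
  haveI : IsFiniteMeasure b := μ.toJordanDecomposition.negPart.isFiniteMeasure_map p
  set J := MeasureTheory.SignedMeasure.toJordanDecomposition (μ.map p) with hJ
  have hsm : J.posPart.toSignedMeasure - J.negPart.toSignedMeasure =
      a.toSignedMeasure - b.toSignedMeasure := by
    rw [← JordanDecomposition.toSignedMeasure, hJ,
      MeasureTheory.SignedMeasure.toSignedMeasure_toJordanDecomposition (μ.map p),
      map_signed p hp μ]
  have key : J.posPart + b = a + J.negPart := by
    refine Measure.ext fun s hs => ?_
    have := congrArg (fun v : SignedMeasure Ω => v s) hsm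
    simp only [VectorMeasure.sub_apply, Measure.toSignedMeasure_apply_measurable hs] at this
    have h1 : (J.posPart s).toReal + (b s).toReal = (a s).toReal + (J.negPart s).toReal := by
      simp only [measureReal_def] at this
      linarith
    rw [Measure.add_apply, Measure.add_apply, ← ENNReal.toReal_add (measure_ne_top _ _)
      (measure_ne_top _ _), ← ENNReal.toReal_add (measure_ne_top _ _) (measure_ne_top _ _)] at *
    exact (ENNReal.toReal_eq_toReal_iff' (by finiteness) (by finiteness)).mp h1
  have hint : (∫ ω, x ω ∂J.posPart) + ∫ ω, x ω ∂b = (∫ ω, x ω ∂a) + ∫ ω, x ω ∂J.negPart := by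
    rw [← integral_add_measure (integrable_contMap x _) (integrable_contMap x _),
      ← integral_add_measure (integrable_contMap x _) (integrable_contMap x _), key]
  have hia : ∫ ω, x ω ∂a = ∫ ω, x (p ω) ∂μ.toJordanDecomposition.posPart :=
    integral_map hp.aemeasurable x.continuous.aestronglyMeasurable
  have hib : ∫ ω, x ω ∂b = ∫ ω, x (p ω) ∂μ.toJordanDecomposition.negPart :=
    integral_map hp.aemeasurable x.continuous.aestronglyMeasurable
  rw [spair, ← hJ]
  rw [hia, hib] at hint
  linarith

lemma map_iterate (φ : Ω → Ω) (hφ : Continuous φ) (n : ℕ) :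
    (fun μ : SignedMeasure Ω => μ.map φ^[n]) = (Vop φ)^[n] := by
  induction n with
  | zero => funext μ; simp [Function.iterate_zero, VectorMeasure.map_id]
  | succ n ih =>
    funext μ
    rw [Function.iterate_succ_apply', ← ih]
    show μ.map φ^[n+1] = Vop φ (μ.map φ^[n])
    rw [Vop]
    refine VectorMeasure.ext fun s hs => ?_
    rw [VectorMeasure.map_apply _ (hφ.measurable.iterate (n+1)) hs,
      VectorMeasure.map_apply _ hφ.measurable hs,
      VectorMeasure.map_apply _ (hφ.measurable.iterate n) (hφ.measurable hs),
      Function.iterate_succ', Set.preimage_comp]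

end Aux

/-- Lemma 1.6: every `p ∈ E_b(Ω,φ)` is Borel measurable, and the pushforward operator
`ψp : X* → X*`, `(ψp μ)(e) = μ(p⁻¹ e)`, belongs to `Γ(Ω,φ)`. -/
theorem stmt_2 (φ : Ω → Ω) (hφ : Continuous φ) (p : Ω → Ω) (hp : Eb φ p) :
    Measurable p ∧
    (∀ (μ : SignedMeasure Ω) (e : Set Ω), MeasurableSet e → (μ.map p) e = μ (p ⁻¹' e)) ∧
    (fun μ : SignedMeasure Ω => μ.map p) ∈ GammaSG φ := by
  induction hp with
  | iterate n =>
    refine ⟨(hφ.iterate n).measurable, fun μ e he =>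
      VectorMeasure.map_apply _ (hφ.iterate n).measurable he, ?_⟩
    rw [map_iterate φ hφ n]
    exact subset_closure ⟨n, rfl⟩
  | lim pk q hpk hq IH =>
    have hm : ∀ k, Measurable (pk k) := fun k => (IH k).1
    have hqm : Measurable q :=
      measurable_of_tendsto_metrizable hm ((tendsto_pi_nhds (f := pk) (g := q)).mpr hq)
    refine ⟨hqm, fun μ e he => VectorMeasure.map_apply _ hqm he, ?_⟩
    have htd : Tendsto (fun k => fun μ : SignedMeasure Ω => μ.map (pk k)) atTop
        (𝓝 (fun μ : SignedMeasure Ω => μ.map q)) := ?_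
    · exact isClosed_closure.mem_of_tendsto htd
        (Filter.Eventually.of_forall fun k => (IH k).2.2)
    refine tendsto_pi_nhds.mpr fun μ => ?_
    rw [nhds_induced, Filter.tendsto_comap_iff]
    refine tendsto_pi_nhds.mpr fun x => ?_
    have hs : ∀ k, spair (⇑x) (μ.map (pk k)) =
        (∫ ω, x (pk k ω) ∂μ.toJordanDecomposition.posPart) -
        (∫ ω, x (pk k ω) ∂μ.toJordanDecomposition.negPart) := fun k => spair_map x _ (hm k) μ
    simp only [Function.comp_def, hs, spair_map x q hqm μ]
    have conv : ∀ (ν : Measure Ω) (_ : IsFiniteMeasure ν),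
        Tendsto (fun k => ∫ ω, x (pk k ω) ∂ν) atTop (𝓝 (∫ ω, x (q ω) ∂ν)) := by
      intro ν hν
      refine tendsto_integral_of_dominated_convergence (fun _ => ‖x‖)
        (fun k => (x.continuous.measurable.comp (hm k)).aestronglyMeasurable)
        (integrable_const _)
        (fun k => Filter.Eventually.of_forall fun ω => x.norm_coe_le_norm _)
        (Filter.Eventually.of_forall fun ω => ?_)
      exact (x.continuous.tendsto (q ω)).comp (hq ω)
    exact ((conv _ inferInstance).sub (conv _ inferInstance))
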